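/- Let Λ = ⊕_{i ≤ 0} Λ^i be a finite-dimensional graded algebra over an algebraically closed field k, concentrated in non-positive degrees, with Jacobson radical J = rad(Λ^0) ⊕ Λ^{<0}. Suppose (m_n)_{n≥2} is a family of k-multilinear maps Λ^{⊗n} → Λ with m_n homogeneous of degree 2-n, m_2 the algebra multiplication, and m_n = 0 for n > n_2 where n_2 = n_0 + 3 and Λ^i = 0 for i < -n_0. Define F^p Λ = Σ_{n ≥ p} Σ_{ψ ∈ Ψ_n} ψ(J^{⊗n}) for p ≥ 1 (and F^0 Λ = Λ), where Ψ_n is the set of n-ary operations obtained by composing the m_i's. Then the decreasing filtration F^* is finite: F^p Λ = 0 for all sufficiently large p. -/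

import Mathlib

/-- `IsOp m n f` : `f` is an `n`-ary operation obtained from the identity by successively
composing with the operations `m_s` (`s ≥ 2`), i.e. applying `1^{⊗r} ⊗ m_s ⊗ 1^{⊗t}` and
composing; equivalently, `f` is the composite of the `m_s` along a planar rooted tree with
`n` leaves.  Operations are represented as functions `(ℕ → Λ) → Λ` depending only on the
first `n` inputs. -/
inductive IsOp {k Λ : Type*} [Field k] [AddCommGroup Λ] [Module k Λ]
    (m : ∀ n : ℕ, MultilinearMap k (fun _ : Fin n => Λ) Λ) : ℕ → ((ℕ → Λ) → Λ) → Prop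
  | id : IsOp m 1 (fun x => x 0)
  | comp (n : ℕ) (f : (ℕ → Λ) → Λ) (hf : IsOp m n f) (r s : ℕ) (hr : r < n) (hs : 2 ≤ s) :
      IsOp m (n + s - 1) (fun x => f (fun j =>
        if j < r then x j
        else if j = r then m s (fun i : Fin s => x (r + (i : ℕ)))
        else x (j + s - 1)))

/-- A multilinear map sends tuples of elements of spans into any submodule containing the
values on tuples of generators. -/
lemma aux_ml_mem {k Λ : Type*} [Field k] [AddCommGroup Λ] [Module k Λ] {s : ℕ}
    (f : MultilinearMap k (fun _ : Fin s => Λ) Λ) (S : Fin s → Set Λ) (q : Submodule k Λ)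
    (h : ∀ v : Fin s → Λ, (∀ i, v i ∈ S i) → f v ∈ q) :
    ∀ v : Fin s → Λ, (∀ i, v i ∈ Submodule.span k (S i)) → f v ∈ q := by
  suffices H : ∀ t : ℕ, ∀ v : Fin s → Λ,
      (∀ i : Fin s, (i : ℕ) < t → v i ∈ Submodule.span k (S i)) →
      (∀ i : Fin s, t ≤ (i : ℕ) → v i ∈ S i) → f v ∈ q by
    intro v hv
    exact H s v (fun i _ => hv i) (fun i hi => absurd i.isLt (by omega))
  intro t
  induction t with
  | zero => exact fun v h1 h2 => h v fun i => h2 i (Nat.zero_le _)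
  | succ t IH =>
    intro v h1 h2
    by_cases hts : t < s
    · set T : Fin s := ⟨t, hts⟩ with hT
      have key : ∀ y ∈ Submodule.span k (S T), f (Function.update v T y) ∈ q := by
        intro y hy
        induction hy using Submodule.span_induction with
        | mem z hz =>
          refine IH (Function.update v T z) (fun i hi => ?_) (fun i hi => ?_)
          · rw [Function.update_of_ne (by simp [hT, Fin.ext_iff]; omega)]
            exact h1 i (by omega)
          · rcases eq_or_ne i T with rfl | hne
            · rw [Function.update_self]; exact hz
            · rw [Function.update_of_ne hne]
              refine h2 i (by_contra fun hc => ?_)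
              exact hne (by simp [hT, Fin.ext_iff]; omega)
        | zero => rw [f.map_update_zero]; exact q.zero_mem
        | add a b _ _ ha hb => rw [f.map_update_add]; exact q.add_mem ha hb
        | smul c a _ ha => rw [f.map_update_smul]; exact q.smul_mem c ha
      have := key (v T) (h1 T (by simp [hT]))
      rwa [Function.update_eq_self] at this
    · exact IH v (fun i hi => h1 i (by omega)) (fun i hi => absurd i.isLt (by omega))

/-- The Jacobson radical of a finite-dimensional algebra is nilpotent (as a `k`-submodule,
for products taken in the algebra). -/
lemma aux_nilpotent {k Λ : Type*} [Field k] [Ring Λ] [Algebra k Λ] [FiniteDimensional k Λ] :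
    ∃ l : ℕ, 1 ≤ l ∧ ∀ a : ℕ, l ≤ a →
      (((Ideal.jacobson (⊥ : Ideal Λ)).restrictScalars k) ^ a : Submodule k Λ) = ⊥ := by
  set Jac := Ideal.jacobson (⊥ : Ideal Λ) with hJac
  set JS : Submodule k Λ := Jac.restrictScalars k with hJS
  have hLSJ : ∀ (c x : Λ), x ∈ JS → c * x ∈ JS := by
    intro c x hx
    have hx' : x ∈ Jac := hx
    have := Jac.smul_mem c hx'
    exact this
  have hLSmul : ∀ (p q : Submodule k Λ), (∀ c x, x ∈ p → c * x ∈ p) →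
      ∀ c x, x ∈ p * q → c * x ∈ p * q := by
    intro p q hp c x hx
    refine Submodule.mul_induction_on hx (fun a ha b hb => ?_) (fun y z hy hz => ?_)
    · rw [← mul_assoc]; exact Submodule.mul_mem_mul (hp c a ha) hb
    · rw [mul_add]; exact add_mem hy hz
  have hLSpow : ∀ t : ℕ, ∀ c x, x ∈ JS ^ (t + 1) → c * x ∈ JS ^ (t + 1) := by
    intro t c x hx
    rw [pow_succ'] at hx ⊢
    exact hLSmul _ _ hLSJ c x hx
  have hpow_le : ∀ t : ℕ, JS ^ (t + 1) ≤ JS := by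
    intro t
    rw [pow_succ]
    exact Submodule.mul_le.mpr fun a _ b hb => hLSJ a b hb
  have hmono : Monotone (fun t : ℕ => OrderDual.toDual (JS ^ (t + 1))) := by
    refine monotone_nat_of_le_succ fun t => ?_
    show JS ^ (t + 1 + 1) ≤ JS ^ (t + 1)
    rw [pow_succ']
    exact Submodule.mul_le.mpr fun a _ b hb => hLSpow t a b hb
  obtain ⟨n, hn⟩ := IsArtinian.monotone_stabilizes
    (⟨fun t : ℕ => OrderDual.toDual (JS ^ (t + 1)), hmono⟩ : ℕ →o (Submodule k Λ)ᵒᵈ)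
  set l := n + 1 with hl
  have hstab : ∀ t, l ≤ t → JS ^ t = JS ^ l := by
    intro t ht
    have := hn (t - 1) (by omega)
    have h2 : JS ^ (n + 1) = JS ^ (t - 1 + 1) := congrArg OrderDual.ofDual this
    rw [show t - 1 + 1 = t by omega] at h2
    exact h2.symm
  have hII : JS ^ l * JS ^ l = JS ^ l := by
    rw [← pow_add]; exact hstab (l + l) (by omega)
  have hLSl : ∀ c x, x ∈ JS ^ l → c * x ∈ JS ^ l := fun c x hx => hLSpow n c x hx
  have hbot : JS ^ l = ⊥ := by
    by_contra hne
    obtain ⟨K, hKmem, hmin⟩ := IsArtinian.set_has_minimal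
      {K : Submodule k Λ | (∀ c x, x ∈ K → c * x ∈ K) ∧ JS ^ l * K ≠ ⊥}
      ⟨JS ^ l, hLSl, by rwa [hII]⟩
    obtain ⟨hKLS, hKne⟩ := hKmem
    have hex : ∃ x ∈ K, JS ^ l * Submodule.span k {x} ≠ ⊥ := by
      by_contra h
      push_neg at h
      apply hKne
      rw [eq_bot_iff]
      refine Submodule.mul_le.mpr fun a ha b hb => ?_
      have hmem : a * b ∈ JS ^ l * Submodule.span k {b} :=
        Submodule.mul_mem_mul ha (Submodule.mem_span_singleton_self b)
      rw [h b hb] at hmem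
      simpa using hmem
    obtain ⟨x, hxK, hxne⟩ := hex
    set K' := JS ^ l * Submodule.span k {x} with hK'
    have hK'LS : ∀ c y, y ∈ K' → c * y ∈ K' := hLSmul _ _ hLSl
    have hK'ne : JS ^ l * K' ≠ ⊥ := by rw [hK', ← mul_assoc, hII]; exact hxne
    have hK'le : K' ≤ K := by
      refine Submodule.mul_le.mpr fun a ha b hb => ?_
      obtain ⟨c, rfl⟩ := Submodule.mem_span_singleton.mp hb
      rw [mul_smul_comm]
      exact K.smul_mem c (hKLS a x hxK)
    have hK'K : K' = K := eq_of_le_of_not_lt hK'le (hmin K' ⟨hK'LS, hK'ne⟩)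
    have hxK' : x ∈ K' := hK'K ▸ hxK
    have hax : ∀ y ∈ K', ∃ a ∈ JS ^ l, y = a * x := by
      intro y hy
      refine Submodule.mul_induction_on hy (fun a ha b hb => ?_) ?_
      · obtain ⟨c, rfl⟩ := Submodule.mem_span_singleton.mp hb
        exact ⟨c • a, Submodule.smul_mem _ c ha, by rw [mul_smul_comm, smul_mul_assoc]⟩
      · rintro y z ⟨a, ha, hy⟩ ⟨b, hb, hz⟩
        exact ⟨a + b, add_mem ha hb, by rw [hy, hz, add_mul]⟩
    obtain ⟨a, haJ, hxa⟩ := hax x hxK'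
    have haJac : a ∈ Jac := hpow_le n haJ
    obtain ⟨z, hz0⟩ := Ideal.mem_jacobson_iff.mp haJac (-1)
    rw [Ideal.mem_bot] at hz0
    have hz : z * (1 - a) = 1 := by
      have h1 : z * (1 - a) = z * -1 * a + z - 1 + 1 := by
        rw [mul_one_sub, mul_neg_one, neg_mul]; abel
      rw [h1, hz0, zero_add]
    have hx0 : x = 0 := by
      have h1 : (1 - a) * x = 0 := by rw [sub_mul, one_mul, ← hxa, sub_self]
      calc x = 1 * x := (one_mul x).symm
        _ = z * (1 - a) * x := by rw [hz]
        _ = z * ((1 - a) * x) := by rw [mul_assoc]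
        _ = 0 := by rw [h1, mul_zero]
    apply hxne
    rw [hK', hx0, Submodule.span_zero_singleton, Submodule.mul_bot]
  refine ⟨l, by omega, fun a ha => ?_⟩
  rw [hstab a ha, hbot]

/-- Reindexing lemma for the sums of weights appearing in the composition step. -/
lemma aux_sum (w : ℕ → ℕ) (r s n : ℕ) (hr : r < n) (hs : 2 ≤ s) :
    ∑ j ∈ Finset.range n,
      (if j < r then w j else if j = r then ∑ t ∈ Finset.range s, w (r + t)
        else w (j + s - 1)) = ∑ i ∈ Finset.range (n + s - 1), w i := by
  have e1 : ∑ j ∈ Finset.Ico 0 r,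
      (if j < r then w j else if j = r then ∑ t ∈ Finset.range s, w (r + t)
        else w (j + s - 1)) = ∑ j ∈ Finset.Ico 0 r, w j :=
    Finset.sum_congr rfl fun j hj => by rw [if_pos (Finset.mem_Ico.mp hj).2]
  have e2 : ∑ j ∈ Finset.Ico (r + 1) n,
      (if j < r then w j else if j = r then ∑ t ∈ Finset.range s, w (r + t)
        else w (j + s - 1)) = ∑ j ∈ Finset.Ico (r + 1) n, w (j + s - 1) := by
    refine Finset.sum_congr rfl fun j hj => ?_
    have := (Finset.mem_Ico.mp hj).1
    rw [if_neg (by omega), if_neg (by omega)]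
  have e3 : ∑ j ∈ Finset.Ico (r + 1) n, w (j + s - 1)
      = ∑ j ∈ Finset.Ico (r + s) (n + s - 1), w j := by
    rw [Finset.sum_Ico_eq_sum_range, Finset.sum_Ico_eq_sum_range]
    rw [show n + s - 1 - (r + s) = n - (r + 1) by omega]
    exact Finset.sum_congr rfl fun i _ => by congr 1; omega
  have e4 : ∑ j ∈ Finset.Ico r (r + s), w j = ∑ t ∈ Finset.range s, w (r + t) := by
    rw [Finset.sum_Ico_eq_sum_range, show r + s - r = s by omega]
  calc ∑ j ∈ Finset.range n,
      (if j < r then w j else if j = r then ∑ t ∈ Finset.range s, w (r + t)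
        else w (j + s - 1))
      = ∑ j ∈ Finset.Ico 0 r,
          (if j < r then w j else if j = r then ∑ t ∈ Finset.range s, w (r + t)
            else w (j + s - 1))
        + ∑ j ∈ Finset.Ico r n,
          (if j < r then w j else if j = r then ∑ t ∈ Finset.range s, w (r + t)
            else w (j + s - 1)) := by
        rw [Finset.range_eq_Ico, ← Finset.sum_Ico_consecutive _ (Nat.zero_le r) (le_of_lt hr)]
    _ = ∑ j ∈ Finset.Ico 0 r, w j + ((∑ t ∈ Finset.range s, w (r + t))
        + ∑ j ∈ Finset.Ico (r + s) (n + s - 1), w j) := by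
        rw [e1, Finset.sum_eq_sum_Ico_succ_bot hr, if_neg (by omega), if_pos rfl, e2, e3]
    _ = ∑ j ∈ Finset.Ico 0 r, w j + (∑ j ∈ Finset.Ico r (r + s), w j
        + ∑ j ∈ Finset.Ico (r + s) (n + s - 1), w j) := by rw [e4]
    _ = ∑ i ∈ Finset.range (n + s - 1), w i := by
        rw [Finset.sum_Ico_consecutive _ (by omega : r ≤ r + s) (by omega : r + s ≤ n + s - 1),
          Finset.sum_Ico_consecutive _ (Nat.zero_le r) (by omega : r ≤ n + s - 1),
          Finset.range_eq_Ico]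

/-- Let `Λ` be a finite-dimensional graded algebra over an algebraically
closed field `k`, concentrated in degrees in `[-n₀, 0]`, with Jacobson radical `J`.
Suppose `(mₙ)` is a family of `k`-multilinear maps `Λ^{⊗n} → Λ`, with `mₙ` homogeneous of
degree `2 - n`, `m₂` the multiplication, and `mₙ = 0` for `n > n₀ + 3`.  Define
`F^p Λ = Σ_{n ≥ p} Σ_{ψ ∈ Ψ_n} ψ(J^{⊗n})` for `p ≥ 1`, where `Ψ_n` is the set of `n`-ary
composites of the `mᵢ`.  Then the decreasing filtration `F^*` is finite: `F^p Λ = 0` for all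
sufficiently large `p`. -/
theorem stmt_14 (k Λ : Type*) [Field k] [IsAlgClosed k] [Ring Λ] [Algebra k Λ]
    [FiniteDimensional k Λ]
    (𝒜 : ℤ → Submodule k Λ) [GradedAlgebra 𝒜]
    (n₀ : ℕ) (hvanish : ∀ i : ℤ, (0 < i ∨ i < -(n₀ : ℤ)) → 𝒜 i = ⊥)
    (m : ∀ n : ℕ, MultilinearMap k (fun _ : Fin n => Λ) Λ)
    (hhom : ∀ (n : ℕ) (d : Fin n → ℤ) (x : ∀ _ : Fin n, Λ), (∀ j, x j ∈ 𝒜 (d j)) →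
      m n x ∈ 𝒜 ((∑ j, d j) + (2 - (n : ℤ))))
    (hmul : ∀ x : Fin 2 → Λ, m 2 x = x 0 * x 1)
    (hzero : ∀ n : ℕ, n > n₀ + 3 → m n = 0)
    (J : Set Λ) (hJ : J = {a : Λ | a ∈ Ideal.jacobson (⊥ : Ideal Λ)})
    (F : ℕ → Submodule k Λ)
    (hF : ∀ p : ℕ, 1 ≤ p → F p = Submodule.span k
      {y : Λ | ∃ n : ℕ, p ≤ n ∧ ∃ f : (ℕ → Λ) → Λ, IsOp m n f ∧
        ∃ x : ℕ → Λ, (∀ i, x i ∈ J) ∧ y = f x}) :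
    ∃ p₀ : ℕ, ∀ p : ℕ, p₀ ≤ p → F p = ⊥ := by
  classical
  obtain ⟨l, hl1, hJSbot⟩ := aux_nilpotent (k := k) (Λ := Λ)
  set Jac := Ideal.jacobson (⊥ : Ideal Λ) with hJac
  set JS : Submodule k Λ := Jac.restrictScalars k with hJS
  set C : ℕ := (n₀ + 3) * l + 1 with hC
  -- the auxiliary "low degree" filtration
  set L : ℕ → Submodule k Λ :=
    fun b => Submodule.span k {v : Λ | ∃ i : ℤ, i ≤ -(b : ℤ) ∧ v ∈ 𝒜 i} with hL
  have hL0 : ∀ v : Λ, v ∈ L 0 := by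
    intro v
    rw [← DirectSum.sum_support_decompose 𝒜 v]
    refine Submodule.sum_mem _ fun i _ => ?_
    rcases le_or_gt i 0 with h | h
    · exact Submodule.subset_span ⟨i, by simpa using h, SetLike.coe_mem _⟩
    · have hb : (DirectSum.decompose 𝒜 v i : Λ) ∈ (⊥ : Submodule k Λ) :=
        hvanish i (Or.inl h) ▸ SetLike.coe_mem _
      rw [(Submodule.mem_bot k).mp hb]
      exact zero_mem _
  have hLmul : ∀ (a b : ℕ), ∀ x ∈ L a, ∀ y ∈ L b, x * y ∈ L (a + b) := by
    intro a b x hx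
    induction hx using Submodule.span_induction with
    | mem u hu =>
      intro y hy
      induction hy using Submodule.span_induction with
      | mem v hv =>
        obtain ⟨i, hi, hui⟩ := hu
        obtain ⟨j, hj, hvj⟩ := hv
        exact Submodule.subset_span
          ⟨i + j, by push_cast; omega, SetLike.mul_mem_graded hui hvj⟩
      | zero => rw [mul_zero]; exact zero_mem _
      | add v v' _ _ h1 h2 => rw [mul_add]; exact add_mem h1 h2
      | smul c v _ h1 => rw [mul_smul_comm]; exact Submodule.smul_mem _ c h1
    | zero => intro y _; rw [zero_mul]; exact zero_mem _
    | add u u' _ _ h1 h2 => intro y hy; rw [add_mul]; exact add_mem (h1 y hy) (h2 y hy)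
    | smul c u _ h1 => intro y hy; rw [smul_mul_assoc]; exact Submodule.smul_mem _ c (h1 y hy)
  have hLbot : ∀ v ∈ L (n₀ + 1), v = 0 := by
    intro v hv
    have : L (n₀ + 1) ≤ ⊥ := by
      rw [hL]
      refine Submodule.span_le.mpr ?_
      rintro u ⟨i, hi, hui⟩
      have : 𝒜 i = ⊥ := hvanish i (Or.inr (by push_cast at hi ⊢; omega))
      simpa [this] using hui
    simpa using this hv
  -- negatively graded homogeneous elements lie in the Jacobson radical
  have hneg : ∀ (x : Λ) (i : ℤ), i < 0 → x ∈ 𝒜 i → x ∈ Jac := by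
    intro x i hi hx
    rw [hJac, Ideal.mem_jacobson_iff]
    intro y
    have hyx : y * x ∈ L 1 := by
      have h1 : x ∈ L 1 := Submodule.subset_span ⟨i, by push_cast; omega, hx⟩
      have := hLmul 0 1 y (hL0 y) x h1
      simpa using this
    have hpow : ∀ p : ℕ, (y * x) ^ p ∈ L p := by
      intro p
      induction p with
      | zero => simpa using hL0 1
      | succ p ih => rw [pow_succ]; exact hLmul p 1 _ ih _ hyx
    have hnil : IsNilpotent (y * x) := ⟨n₀ + 1, hLbot _ (hpow (n₀ + 1))⟩
    obtain ⟨u, hu⟩ := hnil.isUnit_one_add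
    refine ⟨(↑u⁻¹ : Λ), ?_⟩
    rw [Ideal.mem_bot]
    have h1 : (↑u⁻¹ : Λ) * (1 + y * x) = 1 := by rw [← hu]; exact u.inv_mul
    calc (↑u⁻¹ : Λ) * y * x + ↑u⁻¹ - 1 = ↑u⁻¹ * (1 + y * x) - 1 := by noncomm_ring
      _ = 0 := by rw [h1, sub_self]
  -- components of Jacobson radical elements lie in the Jacobson radical
  have hcomp : ∀ x ∈ Jac, ∀ i : ℤ, (DirectSum.decompose 𝒜 x i : Λ) ∈ Jac := by
    intro x hx i
    rcases lt_trichotomy i 0 with h | h | h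
    · exact hneg _ i h (SetLike.coe_mem _)
    · subst h
      by_cases h0 : (0 : ℤ) ∈ (DirectSum.decompose 𝒜 x).support
      · have hsum := DirectSum.sum_support_decompose 𝒜 x
        have he := Finset.sum_erase_add (DirectSum.decompose 𝒜 x).support
          (fun j => (DirectSum.decompose 𝒜 x j : Λ)) h0
        have hrepr : (DirectSum.decompose 𝒜 x 0 : Λ) =
            x - ∑ j ∈ (DirectSum.decompose 𝒜 x).support.erase 0,
              (DirectSum.decompose 𝒜 x j : Λ) := by
          rw [eq_sub_iff_add_eq, add_comm]
          rw [he, hsum]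
        rw [hrepr]
        refine sub_mem hx (Submodule.sum_mem _ fun j hj => ?_)
        have hj0 : j ≠ 0 := Finset.ne_of_mem_erase hj
        rcases lt_or_gt_of_ne hj0 with hneg' | hpos
        · exact hneg _ j hneg' (SetLike.coe_mem _)
        · have hb : (DirectSum.decompose 𝒜 x j : Λ) ∈ (⊥ : Submodule k Λ) :=
            hvanish j (Or.inl hpos) ▸ SetLike.coe_mem _
          rw [(Submodule.mem_bot k).mp hb]
          exact zero_mem _
      · have h1 : DirectSum.decompose 𝒜 x 0 = 0 := DFinsupp.notMem_support_iff.mp h0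
        rw [h1]
        simpa using zero_mem Jac
    · have hb : (DirectSum.decompose 𝒜 x i : Λ) ∈ (⊥ : Submodule k Λ) :=
        hvanish i (Or.inl h) ▸ SetLike.coe_mem _
      rw [(Submodule.mem_bot k).mp hb]
      exact zero_mem _
  -- the weight filtration
  set G : ℕ → Set Λ := fun w => {y : Λ | ∃ a b : ℕ, ∃ d : ℤ,
    w ≤ a + C * b ∧ y ∈ JS ^ a ∧ y ∈ 𝒜 d ∧ d ≤ -(b : ℤ)} with hG
  set V : ℕ → Submodule k Λ := fun w => Submodule.span k (G w) with hV
  have hVbot : ∀ w : ℕ, l + C * (n₀ + 1) + 1 ≤ w → V w = ⊥ := by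
    intro w hw
    rw [hV]
    refine Submodule.span_eq_bot.mpr ?_
    rintro y ⟨a, b, d, hab, hya, hyd, hdb⟩
    by_cases hb : n₀ + 1 ≤ b
    · have h1 : 𝒜 d = ⊥ := hvanish d (Or.inr (by push_cast at hdb ⊢; omega))
      simpa [h1] using hyd
    · have h1 : C * b ≤ C * n₀ := Nat.mul_le_mul_left C (by omega)
      have h2 : C * (n₀ + 1) = C * n₀ + C := by ring
      have hal : l ≤ a := by omega
      have : y ∈ (⊥ : Submodule k Λ) := hJSbot a hal ▸ hya
      simpa using this
  -- the Jacobson radical lies in weight ≥ 1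
  have hJV1 : ∀ x ∈ Jac, x ∈ V 1 := by
    intro x hx
    rw [← DirectSum.sum_support_decompose 𝒜 x]
    refine Submodule.sum_mem _ fun i _ => ?_
    rcases le_or_gt i 0 with h | h
    · refine Submodule.subset_span ⟨1, 0, i, by omega, ?_, SetLike.coe_mem _, by simpa using h⟩
      rw [pow_one]
      exact hcomp x hx i
    · have hb : (DirectSum.decompose 𝒜 x i : Λ) ∈ (⊥ : Submodule k Λ) :=
        hvanish i (Or.inl h) ▸ SetLike.coe_mem _
      rw [(Submodule.mem_bot k).mp hb]
      exact zero_mem _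
  -- the key multiplicativity of the weight filtration
  have hB : ∀ (s : ℕ), 2 ≤ s → ∀ (w : Fin s → ℕ) (v : Fin s → Λ),
      (∀ i, v i ∈ V (w i)) → m s v ∈ V (∑ i, w i) := by
    intro s hs w v hv
    refine aux_ml_mem (m s) (fun i => G (w i)) (V (∑ i, w i)) ?_ v (fun i => hv i)
    intro u hu
    choose A B D h1 h2 h3 h4 using hu
    by_cases hbig : n₀ + 3 < s
    · rw [hzero s hbig]
      simpa using zero_mem (V (∑ i, w i))
    by_cases hcap : ∃ i, l + 1 ≤ A i
    · obtain ⟨i, hi⟩ := hcap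
      have h0 : u i = 0 := by
        have := h2 i
        rw [hJSbot (A i) (by omega)] at this
        simpa using this
      rw [(m s).map_coord_zero i h0]
      exact zero_mem _
    push_neg at hcap
    have hwle : ∑ i, w i ≤ (∑ i, A i) + C * (∑ i, B i) := by
      calc ∑ i, w i ≤ ∑ i, (A i + C * B i) := Finset.sum_le_sum fun i _ => h1 i
        _ = (∑ i, A i) + C * ∑ i, B i := by rw [Finset.sum_add_distrib, Finset.mul_sum]
    have hDle : (∑ i, D i) ≤ -(∑ i, (B i : ℤ)) := by
      have := Finset.sum_le_sum (s := Finset.univ) fun i _ => h4 i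
      simpa [Finset.sum_neg_distrib] using this
    have hBcast : ((∑ i, B i : ℕ) : ℤ) = ∑ i, (B i : ℤ) := by push_cast; rfl
    have hy : m s u ∈ 𝒜 ((∑ i, D i) + (2 - (s : ℤ))) := hhom s D u h3
    rcases eq_or_lt_of_le hs with hs2 | hs3
    · -- binary multiplication
      subst hs2
      have hmem2 : m 2 u ∈ JS ^ (∑ i, A i) := by
        rw [hmul u, Fin.sum_univ_two, pow_add]
        exact Submodule.mul_mem_mul (h2 0) (h2 1)
      refine Submodule.subset_span
        ⟨∑ i, A i, ∑ i, B i, (∑ i, D i) + (2 - (2 : ℕ) : ℤ), hwle, hmem2, hy, ?_⟩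
      rw [hBcast]
      have : ((2 : ℕ) : ℤ) = 2 := by norm_num
      rw [this]
      linarith
    · -- higher multiplication: strictly decreases degree
      have hs3' : (3 : ℤ) ≤ (s : ℤ) := by exact_mod_cast hs3
      have hDnp : (∑ i, D i) ≤ 0 := le_trans hDle (by
        have : (0 : ℤ) ≤ ∑ i, (B i : ℤ) := Finset.sum_nonneg fun i _ => by positivity
        omega)
      have hdeg_neg : (∑ i, D i) + (2 - (s : ℤ)) < 0 := by omega
      have hmem1 : m s u ∈ JS ^ 1 := by
        rw [pow_one]
        exact hneg _ _ hdeg_neg hy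
      refine Submodule.subset_span
        ⟨1, (∑ i, B i) + (s - 2), (∑ i, D i) + (2 - (s : ℤ)), ?_, hmem1, hy, ?_⟩
      · have e1 : ∑ i, A i ≤ s * l := by
          calc ∑ i, A i ≤ ∑ _i : Fin s, l := Finset.sum_le_sum fun i _ => by
                have := hcap i; omega
            _ = s * l := by simp [Finset.sum_const, mul_comm]
        have e2 : s * l ≤ (n₀ + 3) * l := Nat.mul_le_mul_right l (by omega)
        have e3 : C * ((∑ i, B i) + (s - 2)) = C * (∑ i, B i) + C * (s - 2) := Nat.mul_add _ _ _
        have e4 : C ≤ C * (s - 2) := by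
          calc C = C * 1 := (mul_one C).symm
            _ ≤ C * (s - 2) := Nat.mul_le_mul_left C (by omega)
        omega
      · have h2s : (((s - 2 : ℕ)) : ℤ) = (s : ℤ) - 2 := by omega
        rw [Nat.cast_add, hBcast, h2s]
        linarith
  -- the main induction over operations
  have hmain : ∀ (n : ℕ) (f : (ℕ → Λ) → Λ), IsOp m n f → ∀ (w : ℕ → ℕ) (x : ℕ → Λ),
      (∀ i, i < n → x i ∈ V (w i)) → f x ∈ V (∑ i ∈ Finset.range n, w i) := by
    intro n f hf
    induction hf with
    | id =>
      intro w x hx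
      simpa [Finset.sum_range_one] using hx 0 (by norm_num)
    | comp n f hf r s hr hs IH =>
      intro w x hx
      rw [← aux_sum w r s n hr hs]
      refine IH (fun j => if j < r then w j else if j = r then ∑ t ∈ Finset.range s, w (r + t)
        else w (j + s - 1)) _ ?_
      intro j hj
      by_cases hjr : j < r
      · simp only [if_pos hjr]
        exact hx j (by omega)
      · by_cases hjr' : j = r
        · subst hjr'
          simp only [if_neg hjr, if_pos rfl]
          have hmem := hB s hs (fun t : Fin s => w (j + (t : ℕ)))
            (fun t : Fin s => x (j + (t : ℕ)))
            (fun t => hx (j + (t : ℕ)) (by have := t.isLt; omega))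
          rwa [Fin.sum_univ_eq_sum_range (fun t => w (j + t)) s] at hmem
        · simp only [if_neg hjr, if_neg hjr']
          exact hx (j + s - 1) (by omega)
  -- conclusion
  refine ⟨l + C * (n₀ + 1) + 1, fun p hp => ?_⟩
  rw [hF p (by omega)]
  refine Submodule.span_eq_bot.mpr ?_
  rintro y ⟨n, hn, f, hfop, x, hxJ, rfl⟩
  have h1 : ∀ i, i < n → x i ∈ V 1 := by
    intro i _
    refine hJV1 (x i) ?_
    have := hxJ i
    rwa [hJ] at this
  have hfx := hmain n f hfop (fun _ => 1) x h1
  rw [Finset.sum_const, Finset.card_range, smul_eq_mul, mul_one] at hfx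
  have hVn : V n = ⊥ := hVbot n (by omega)
  rw [hVn] at hfx
  simpa using hfx
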